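/- Let V be a finite-dimensional vector space over a field, ω a nondegenerate alternating bilinear form on V, and Q : V → V a linear map with Q∘Q = 0 and ω(Qx, y) + ω(x, Qy) = 0 for all x, y ∈ V. Then ω(Qx, w) = 0 for every x ∈ V and every w ∈ ker Q, so ω descends to a well-defined bilinear form on the homology ker Q / range Q; moreover this induced bilinear form on ker Q / range Q is alternating and nondegenerate. -/

import Mathlib

/-- Let `V` be a finite-dimensional vector space over a field, `ω` a
nondegenerate alternating bilinear form on `V`, and `Q : V → V` linear with
`Q∘Q = 0` and `ω(Qx,y) + ω(x,Qy) = 0`. Then `ω(Qx,w) = 0` whenever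
`Q w = 0`, so `ω` descends to a well-defined bilinear form on the homology
`ker Q / range Q`; the induced form is alternating and nondegenerate. -/
theorem homology_inherits_symplectic_form
    {K V : Type*} [Field K]
    [AddCommGroup V] [Module K V] [FiniteDimensional K V]
    (ω : LinearMap.BilinForm K V) (halt : ω.IsAlt) (hnd : ω.Nondegenerate)
    (Q : V →ₗ[K] V) (hQ2 : Q ∘ₗ Q = 0)
    (hcompat : ∀ x y : V, ω (Q x) y + ω x (Q y) = 0) :
    -- ω vanishes when one argument is a boundary and the other a cycle
    (∀ x : V, ∀ w ∈ LinearMap.ker Q, ω (Q x) w = 0) ∧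
    -- so it descends to a bilinear form on the homology ker Q / range Q,
    -- which is alternating and nondegenerate
    (∃ ωbar : LinearMap.BilinForm K
        ((LinearMap.ker Q) ⧸ (LinearMap.range Q).comap (LinearMap.ker Q).subtype),
      (∀ x y : LinearMap.ker Q,
        ωbar (Submodule.Quotient.mk x) (Submodule.Quotient.mk y) = ω x y) ∧
      ωbar.IsAlt ∧ ωbar.Nondegenerate) := by
  have hrefl : ω.IsRefl := halt.isRefl
  -- first part
  have h1 : ∀ x : V, ∀ w ∈ LinearMap.ker Q, ω (Q x) w = 0 := by
    intro x w hw
    have := hcompat x w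
    rw [LinearMap.mem_ker.mp hw, map_zero] at this
    simpa using this
  refine ⟨h1, ?_⟩
  -- vanishing with boundary on either side, cycle on other
  have h1' : ∀ x : V, ∀ w ∈ LinearMap.ker Q, ω w (Q x) = 0 :=
    fun x w hw => hrefl _ _ (h1 x w hw)
  set N := (LinearMap.range Q).comap (LinearMap.ker Q).subtype with hN
  set B : LinearMap.BilinForm K (LinearMap.ker Q) :=
    ω.compl₁₂ (LinearMap.ker Q).subtype (LinearMap.ker Q).subtype with hB
  have hBapp : ∀ x y : LinearMap.ker Q, B x y = ω x y := fun x y => rfl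
  have hflipN : ∀ n ∈ N, B.flip n = 0 := by
    intro n hn
    ext y
    obtain ⟨x, hx⟩ := Submodule.mem_comap.mp hn
    show ω (y : V) (n : V) = 0
    have : (n : V) = Q x := hx.symm
    rw [this]
    exact h1' x y y.2
  have hflipN' : N ≤ LinearMap.ker B.flip := fun n hn => LinearMap.mem_ker.mpr (hflipN n hn)
  set D := (Submodule.liftQ N B.flip hflipN').flip with hD
  have hDapp : ∀ (x y : LinearMap.ker Q), D x (Submodule.Quotient.mk y) = ω x y := by
    intro x y; rfl
  have hDN : N ≤ LinearMap.ker D := by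
    intro n hn
    rw [LinearMap.mem_ker]
    refine LinearMap.ext fun q => ?_
    obtain ⟨y, rfl⟩ := Submodule.Quotient.mk_surjective _ q
    obtain ⟨x, hx⟩ := Submodule.mem_comap.mp hn
    show ω (n : V) (y : V) = 0
    have : (n : V) = Q x := hx.symm
    rw [this]
    exact h1 x y y.2
  refine ⟨Submodule.liftQ N D hDN, ?_, ?_, ?_⟩
  · intro x y; rfl
  · intro q
    obtain ⟨x, rfl⟩ := Submodule.Quotient.mk_surjective _ q
    exact halt x
  · -- nondegenerate
    -- key: orthogonal of ker Q is range Q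
    have horth1 : ω.orthogonal (LinearMap.range Q) = LinearMap.ker Q := by
      ext w
      simp only [LinearMap.BilinForm.mem_orthogonal_iff, LinearMap.BilinForm.IsOrtho]
      constructor
      · intro h
        have hall : ∀ x : V, ω (Q w) x = 0 := by
          intro x
          have hc := hcompat x w
          have h2 : ω (Q x) w = 0 := h (Q x) ⟨x, rfl⟩
          rw [h2, zero_add] at hc
          exact hrefl _ _ hc
        exact LinearMap.mem_ker.mpr (hnd.1 _ hall)
      · intro hw n ⟨x, hx⟩
        rw [← hx]; exact h1 x w hw
    have horth2 : ω.orthogonal (LinearMap.ker Q) = LinearMap.range Q := by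
      rw [← horth1]
      exact ω.orthogonal_orthogonal hnd hrefl _
    -- suffices left-separating
    have hsep : (Submodule.liftQ N D hDN).SeparatingLeft := by
      intro q hq
      obtain ⟨v, rfl⟩ := Submodule.Quotient.mk_surjective _ q
      rw [Submodule.Quotient.mk_eq_zero]
      have hv : (v : V) ∈ ω.orthogonal (LinearMap.ker Q) := by
        intro n hn
        have := hq (Submodule.Quotient.mk ⟨n, hn⟩)
        exact hrefl _ _ this
      rw [horth2] at hv
      exact Submodule.mem_comap.mpr hv
    exact (LinearMap.IsRefl.nondegenerate_iff_separatingLeft (LinearMap.IsAlt.isRefl (fun q => by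
      obtain ⟨x, rfl⟩ := Submodule.Quotient.mk_surjective _ q
      exact halt x))).mpr (fun q hq => hsep q hq)
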